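/- Let a, b, c ∈ ℤ² be such that the origin lies in the interior of the triangle conv{a, b, c}, and let α₁, α₂, α₃ ∈ ℂ ∖ {0}. Define Q : (ℂ ∖ {0})² → ℂ by Q(z₁,z₂) = α₁·z₁^{a₁}z₂^{a₂} + α₂·z₁^{b₁}z₂^{b₂} + α₃·z₁^{c₁}z₂^{c₂} (integer, possibly negative, exponents). Then the set of critical points of Q in (ℂ ∖ {0})², i.e. points at which both partial derivatives ∂Q/∂z₁ and ∂Q/∂z₂ vanish, is finite of cardinality exactly |det(b − a, c − a)|, and each critical point is nondegenerate, i.e. the determinant of the Hessian matrix of Q there is nonzero. -/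

import Mathlib

noncomputable section

/-- The Laurent trinomial `Q(z₁,z₂) = α₁ z₁^{a₁}z₂^{a₂} + α₂ z₁^{b₁}z₂^{b₂} + α₃ z₁^{c₁}z₂^{c₂}`. -/
def trinom (a b c : ℤ × ℤ) (α1 α2 α3 : ℂ) (z : ℂ × ℂ) : ℂ :=
  α1 * z.1 ^ a.1 * z.2 ^ a.2 + α2 * z.1 ^ b.1 * z.2 ^ b.2 + α3 * z.1 ^ c.1 * z.2 ^ c.2

/-- `z` is a critical point of `Q` in the torus `(ℂ ∖ {0})²`. -/
def IsCritPt (Q : ℂ × ℂ → ℂ) (z : ℂ × ℂ) : Prop :=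
  z.1 ≠ 0 ∧ z.2 ≠ 0 ∧
    deriv (fun w => Q (w, z.2)) z.1 = 0 ∧ deriv (fun w => Q (z.1, w)) z.2 = 0

/-- Determinant of the Hessian matrix of `Q : ℂ × ℂ → ℂ` at `z`. -/
def hessDet (Q : ℂ × ℂ → ℂ) (z : ℂ × ℂ) : ℂ :=
  deriv (deriv fun w => Q (w, z.2)) z.1 * deriv (deriv fun w => Q (z.1, w)) z.2 -
    deriv (fun w2 => deriv (fun w1 => Q (w1, w2)) z.1) z.2 *
      deriv (fun w1 => deriv (fun w2 => Q (w1, w2)) z.2) z.1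

/-- The point of `ℝ²` associated to a lattice point. -/
def toR2 (v : ℤ × ℤ) : ℝ × ℝ := ((v.1 : ℝ), (v.2 : ℝ))


/-- roots of `z ^ n = w` among nonzero complexes -/
def RootSet (n : ℤ) (w : ℂ) : Set ℂ := {z | z ≠ 0 ∧ z ^ n = w}

lemma unity_eq (m : ℕ) (hm : m ≠ 0) :
    RootSet (m : ℤ) 1 = ↑(Polynomial.nthRootsFinset m (1 : ℂ)) := by
  ext u
  simp only [RootSet, Set.mem_setOf_eq, Finset.coe_sort_coe, Finset.mem_coe,
    Polynomial.mem_nthRootsFinset (Nat.pos_of_ne_zero hm), zpow_natCast]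
  constructor
  · rintro ⟨-, h⟩; exact h
  · intro h
    refine ⟨?_, h⟩
    rintro rfl
    rw [zero_pow hm] at h
    exact one_ne_zero h.symm

lemma rootSet_pos (m : ℕ) (hm : m ≠ 0) (w : ℂ) (hw : w ≠ 0) :
    (RootSet (m : ℤ) w).Finite ∧ (RootSet (m : ℤ) w).ncard = m := by
  obtain ⟨z0, hz0⟩ := IsAlgClosed.exists_pow_nat_eq w (Nat.pos_of_ne_zero hm)
  have hz0ne : z0 ≠ 0 := by rintro rfl; rw [zero_pow hm] at hz0; exact hw hz0.symm
  have himg : RootSet (m : ℤ) w = (fun u => z0 * u) '' RootSet (m : ℤ) 1 := by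
    ext z
    simp only [RootSet, Set.mem_setOf_eq, Set.mem_image, zpow_natCast]
    constructor
    · rintro ⟨hz, hzm⟩
      exact ⟨z / z0, ⟨div_ne_zero hz hz0ne, by
        rw [div_pow, hzm, ← hz0, div_self (pow_ne_zero _ hz0ne)]⟩,
        by field_simp⟩
    · rintro ⟨u, ⟨hu, hum⟩, rfl⟩
      exact ⟨mul_ne_zero hz0ne hu, by rw [mul_pow, hum, hz0, mul_one]⟩
  have hinj : Function.Injective (fun u : ℂ => z0 * u) :=
    fun x y h => by exact mul_left_cancel₀ hz0ne h
  have hfin1 : (RootSet (m : ℤ) 1).Finite := by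
    rw [unity_eq m hm]; exact (Polynomial.nthRootsFinset m (1 : ℂ)).finite_toSet
  constructor
  · rw [himg]; exact hfin1.image _
  · rw [himg, Set.ncard_image_of_injective _ hinj, unity_eq m hm,
      Set.ncard_coe_finset,
      IsPrimitiveRoot.card_nthRootsFinset (Complex.isPrimitiveRoot_exp m hm)]

lemma rootSet_card (n : ℤ) (hn : n ≠ 0) (w : ℂ) (hw : w ≠ 0) :
    (RootSet n w).Finite ∧ (RootSet n w).ncard = n.natAbs := by
  rcases lt_or_gt_of_ne hn with h | h
  · have hneg : RootSet n w = RootSet ((-n).toNat : ℤ) w⁻¹ := by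
      ext z
      simp only [RootSet, Set.mem_setOf_eq, Int.toNat_of_nonneg (by omega : (0:ℤ) ≤ -n)]
      constructor
      · rintro ⟨hz, hzn⟩
        exact ⟨hz, by rw [zpow_neg, hzn]⟩
      · rintro ⟨hz, hzn⟩
        refine ⟨hz, ?_⟩
        rw [zpow_neg] at hzn
        rw [← inv_inv (z ^ n), hzn, inv_inv]
    have := rootSet_pos (-n).toNat (by omega) w⁻¹ (inv_ne_zero hw)
    rw [hneg]
    exact ⟨this.1, by rw [this.2]; omega⟩
  · have : n = ((n.toNat : ℕ) : ℤ) := by omega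
    rw [this]
    have := rootSet_pos n.toNat (by omega) w hw
    exact ⟨this.1, by rw [this.2]; omega⟩
lemma exists_root (n : ℤ) (hn : n ≠ 0) (w : ℂ) (hw : w ≠ 0) :
    ∃ z : ℂ, z ≠ 0 ∧ z ^ n = w := by
  have h := rootSet_card n hn w hw
  have : (RootSet n w).Nonempty := Set.nonempty_of_ncard_ne_zero (by
    rw [h.2]; omega)
  exact this

/-- solutions of the binomial system on the torus -/
def Sol (p q : ℤ × ℤ) (β γ : ℂ) : Set (ℂ × ℂ) :=
  {z | z.1 ≠ 0 ∧ z.2 ≠ 0 ∧ z.1 ^ p.1 * z.2 ^ p.2 = β ∧ z.1 ^ q.1 * z.2 ^ q.2 = γ}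

lemma sol_swap (p q : ℤ × ℤ) (β γ : ℂ) : Sol p q β γ = Sol q p γ β := by
  ext z; simp only [Sol, Set.mem_setOf_eq]; tauto

lemma zpow_shear (x y : ℂ) (hx : x ≠ 0) (hy : y ≠ 0) (q1 q2 p1 p2 k : ℤ) :
    x ^ (q1 - k * p1) * y ^ (q2 - k * p2)
      = (x ^ q1 * y ^ q2) * ((x ^ p1 * y ^ p2) ^ k)⁻¹ := by
  rw [zpow_sub₀ hx, zpow_sub₀ hy, mul_zpow, mul_comm k p1, mul_comm k p2,
    zpow_mul, zpow_mul, div_mul_div_comm, div_eq_mul_inv]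

lemma sol_shear (p q : ℤ × ℤ) (β γ : ℂ) (hβ : β ≠ 0) (k : ℤ) :
    Sol p q β γ = Sol p (q.1 - k * p.1, q.2 - k * p.2) β (γ * β ^ (-k)) := by
  ext z
  simp only [Sol, Set.mem_setOf_eq]
  constructor
  · rintro ⟨h1, h2, h3, h4⟩
    refine ⟨h1, h2, h3, ?_⟩
    rw [zpow_shear z.1 z.2 h1 h2, h3, h4, zpow_neg]
  · rintro ⟨h1, h2, h3, h4⟩
    refine ⟨h1, h2, h3, ?_⟩
    rw [zpow_shear z.1 z.2 h1 h2, h3, ← zpow_neg] at h4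
    exact mul_right_cancel₀ (zpow_ne_zero _ hβ) h4

lemma sol_base (p q : ℤ × ℤ) (β γ : ℂ) (hβ : β ≠ 0) (hγ : γ ≠ 0) (hp1 : p.1 = 0)
    (hD : p.1 * q.2 - p.2 * q.1 ≠ 0) :
    (Sol p q β γ).Finite ∧ (Sol p q β γ).ncard = (p.1 * q.2 - p.2 * q.1).natAbs := by
  have hp2 : p.2 ≠ 0 := by rintro h; rw [hp1, h] at hD; simp at hD
  have hq1 : q.1 ≠ 0 := by rintro h; rw [hp1, h] at hD; simp at hD
  have hex : ∀ y : ℂ, y ≠ 0 → ∃ z : ℂ, z ≠ 0 ∧ z ^ q.1 = γ * y ^ (-q.2) :=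
    fun y hy => exists_root q.1 hq1 _ (mul_ne_zero hγ (zpow_ne_zero _ hy))
  classical
  set r : ℂ → ℂ := fun y => if hy : y ≠ 0 then (hex y hy).choose else 0 with hr
  have hrspec : ∀ y : ℂ, y ≠ 0 → r y ≠ 0 ∧ (r y) ^ q.1 = γ * y ^ (-q.2) := by
    intro y hy
    simp only [hr, dif_pos hy]
    exact (hex y hy).choose_spec
  set S := RootSet p.2 β with hS
  set T := RootSet q.1 1 with hT
  have himg : Sol p q β γ = (fun w : ℂ × ℂ => (r w.1 * w.2, w.1)) '' (S ×ˢ T) := by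
    ext z
    simp only [Sol, Set.mem_setOf_eq, Set.mem_image, Set.mem_prod, hS, hT, RootSet]
    constructor
    · rintro ⟨h1, h2, h3, h4⟩
      obtain ⟨hrne, hrpow⟩ := hrspec z.2 h2
      have hz2q : z.2 ^ q.2 ≠ 0 := zpow_ne_zero _ h2
      have hq : z.1 ^ q.1 = γ * z.2 ^ (-q.2) := by
        have hh : γ * z.2 ^ (-q.2) * z.2 ^ q.2 = z.1 ^ q.1 * z.2 ^ q.2 := by
          rw [h4, zpow_neg]; field_simp
        exact (mul_right_cancel₀ hz2q hh).symm
      refine ⟨(z.2, z.1 / r z.2), ⟨⟨h2, ?_⟩, div_ne_zero h1 hrne, ?_⟩, ?_⟩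
      · rw [hp1] at h3; simpa using h3
      · rw [div_zpow, hrpow, hq, div_self (mul_ne_zero hγ (zpow_ne_zero _ h2))]
      · show (r z.2 * (z.1 / r z.2), z.2) = z
        rw [mul_comm, div_mul_cancel₀ _ hrne]
    · rintro ⟨⟨y, u⟩, ⟨⟨hy, hyp⟩, hu, hu1⟩, rfl⟩
      obtain ⟨hrne, hrpow⟩ := hrspec y hy
      refine ⟨mul_ne_zero hrne hu, hy, ?_, ?_⟩
      · rw [hp1]; simpa using hyp
      · show (r y * u) ^ q.1 * y ^ q.2 = γ
        rw [mul_zpow, hrpow, hu1, mul_one, zpow_neg]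
        field_simp
  have hfS := (rootSet_card p.2 hp2 β hβ)
  have hfT := (rootSet_card q.1 hq1 1 one_ne_zero)
  have hinj : Set.InjOn (fun w : ℂ × ℂ => (r w.1 * w.2, w.1)) (S ×ˢ T) := by
    rintro ⟨y, u⟩ ⟨⟨hy, -⟩, -⟩ ⟨y', u'⟩ ⟨⟨hy', -⟩, -⟩ h
    simp only [Prod.mk.injEq] at h
    obtain ⟨ha, hb⟩ := h
    subst hb
    have := (hrspec y hy).1
    exact Prod.ext rfl (mul_left_cancel₀ this ha)
  have hfin : (Sol p q β γ).Finite := by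
    rw [himg]; exact (hfS.1.prod hfT.1).image _
  refine ⟨hfin, ?_⟩
  rw [himg, Set.ncard_image_of_injOn hinj,
    Set.ncard_eq_toFinset_card _ (hfS.1.prod hfT.1),
    ← Set.Finite.toFinset_prod hfS.1 hfT.1, Finset.card_product,
    ← Set.ncard_eq_toFinset_card _ hfS.1, ← Set.ncard_eq_toFinset_card _ hfT.1,
    hfS.2, hfT.2, hp1]
  simp [Int.natAbs_mul, Int.natAbs_neg]

lemma sol_count (p q : ℤ × ℤ) (β γ : ℂ) (hβ : β ≠ 0) (hγ : γ ≠ 0)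
    (hD : p.1 * q.2 - p.2 * q.1 ≠ 0) :
    (Sol p q β γ).Finite ∧ (Sol p q β γ).ncard = (p.1 * q.2 - p.2 * q.1).natAbs := by
  obtain ⟨N, hN⟩ : ∃ N, p.1.natAbs < N := ⟨p.1.natAbs + 1, by omega⟩
  induction N generalizing p q β γ with
  | zero => omega
  | succ N ih =>
    by_cases hp1 : p.1 = 0
    · exact sol_base p q β γ hβ hγ hp1 hD
    · set k := q.1 / p.1 with hk
      set q' : ℤ × ℤ := (q.1 - k * p.1, q.2 - k * p.2) with hq'
      have heq : Sol p q β γ = Sol q' p (γ * β ^ (-k)) β := by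
        rw [sol_shear p q β γ hβ k, sol_swap]
      have hq'1 : q'.1 = q.1 % p.1 := by
        simp only [hq', hk]; rw [Int.emod_def]; ring
      have hlt : q'.1.natAbs < p.1.natAbs := by
        rw [hq'1]
        have h1 := Int.emod_nonneg q.1 hp1
        have h2 := Int.emod_lt q.1 hp1
        omega
      have hdet : q'.1 * p.2 - q'.2 * p.1 = -(p.1 * q.2 - p.2 * q.1) := by
        simp only [hq']; ring
      have := ih q' p (γ * β ^ (-k)) β (mul_ne_zero hγ (zpow_ne_zero _ hβ)) hβ
        (by rw [hdet]; omega) (by omega)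
      rw [heq]
      refine ⟨this.1, ?_⟩
      rw [this.2, hdet]
      omega

/-- generic three-monomial derivative lemma -/
lemma hasDerivAt_tri (A1 A2 A3 B1 B2 B3 : ℂ) (m1 m2 m3 : ℤ) (x : ℂ) (hx : x ≠ 0)
    (f : ℂ → ℂ)
    (hf : ∀ w, f w = A1 * w ^ m1 * B1 + A2 * w ^ m2 * B2 + A3 * w ^ m3 * B3) :
    HasDerivAt f
      (A1 * m1 * x ^ (m1 - 1) * B1 + A2 * m2 * x ^ (m2 - 1) * B2
        + A3 * m3 * x ^ (m3 - 1) * B3) x := by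
  have h1 := ((hasDerivAt_zpow m1 x (Or.inl hx)).const_mul A1).mul_const B1
  have h2 := ((hasDerivAt_zpow m2 x (Or.inl hx)).const_mul A2).mul_const B2
  have h3 := ((hasDerivAt_zpow m3 x (Or.inl hx)).const_mul A3).mul_const B3
  have h := (h1.add h2).add h3
  have heq : f = fun w => A1 * w ^ m1 * B1 + A2 * w ^ m2 * B2 + A3 * w ^ m3 * B3 :=
    funext hf
  rw [heq]
  refine h.congr_deriv ?_
  ring

section derivs
variable (a b c : ℤ × ℤ) (α1 α2 α3 : ℂ)

lemma deriv_fst (z2 x : ℂ) (hx : x ≠ 0) :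
    deriv (fun w => trinom a b c α1 α2 α3 (w, z2)) x
      = α1 * a.1 * x ^ (a.1 - 1) * z2 ^ a.2 + α2 * b.1 * x ^ (b.1 - 1) * z2 ^ b.2
        + α3 * c.1 * x ^ (c.1 - 1) * z2 ^ c.2 :=
  (hasDerivAt_tri α1 α2 α3 (z2 ^ a.2) (z2 ^ b.2) (z2 ^ c.2) a.1 b.1 c.1 x hx _
    (fun w => by simp only [trinom])).deriv

lemma deriv_snd (z1 x : ℂ) (hx : x ≠ 0) :
    deriv (fun w => trinom a b c α1 α2 α3 (z1, w)) x
      = (α1 * z1 ^ a.1) * a.2 * x ^ (a.2 - 1) + (α2 * z1 ^ b.1) * b.2 * x ^ (b.2 - 1)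
        + (α3 * z1 ^ c.1) * c.2 * x ^ (c.2 - 1) := by
  have := (hasDerivAt_tri (α1 * z1 ^ a.1) (α2 * z1 ^ b.1) (α3 * z1 ^ c.1) 1 1 1
    a.2 b.2 c.2 x hx (fun w => trinom a b c α1 α2 α3 (z1, w))
    (fun w => by simp only [trinom]; ring)).deriv
  rw [this]; ring

lemma deriv2_fst (z2 x : ℂ) (hx : x ≠ 0) :
    deriv (deriv fun w => trinom a b c α1 α2 α3 (w, z2)) x
      = (α1 * a.1) * ((a.1 : ℂ) - 1) * x ^ (a.1 - 1 - 1) * z2 ^ a.2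
        + (α2 * b.1) * ((b.1 : ℂ) - 1) * x ^ (b.1 - 1 - 1) * z2 ^ b.2
        + (α3 * c.1) * ((c.1 : ℂ) - 1) * x ^ (c.1 - 1 - 1) * z2 ^ c.2 := by
  have hev : (deriv fun w => trinom a b c α1 α2 α3 (w, z2)) =ᶠ[nhds x]
      (fun w => (α1 * a.1) * w ^ (a.1 - 1) * z2 ^ a.2 + (α2 * b.1) * w ^ (b.1 - 1) * z2 ^ b.2
        + (α3 * c.1) * w ^ (c.1 - 1) * z2 ^ c.2) := by
    filter_upwards [isOpen_compl_singleton.mem_nhds hx] with w hw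
    rw [deriv_fst a b c α1 α2 α3 z2 w hw]
  rw [hev.deriv_eq]
  have := (hasDerivAt_tri (α1 * a.1) (α2 * b.1) (α3 * c.1) (z2 ^ a.2) (z2 ^ b.2) (z2 ^ c.2)
    (a.1 - 1) (b.1 - 1) (c.1 - 1) x hx _ (fun w => rfl)).deriv
  rw [this]; push_cast; ring

lemma deriv2_snd (z1 x : ℂ) (hx : x ≠ 0) :
    deriv (deriv fun w => trinom a b c α1 α2 α3 (z1, w)) x
      = (α1 * z1 ^ a.1) * a.2 * ((a.2 : ℂ) - 1) * x ^ (a.2 - 1 - 1)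
        + (α2 * z1 ^ b.1) * b.2 * ((b.2 : ℂ) - 1) * x ^ (b.2 - 1 - 1)
        + (α3 * z1 ^ c.1) * c.2 * ((c.2 : ℂ) - 1) * x ^ (c.2 - 1 - 1) := by
  have hev : (deriv fun w => trinom a b c α1 α2 α3 (z1, w)) =ᶠ[nhds x]
      (fun w => (α1 * z1 ^ a.1 * a.2) * w ^ (a.2 - 1) * 1
        + (α2 * z1 ^ b.1 * b.2) * w ^ (b.2 - 1) * 1
        + (α3 * z1 ^ c.1 * c.2) * w ^ (c.2 - 1) * 1) := by
    filter_upwards [isOpen_compl_singleton.mem_nhds hx] with w hw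
    rw [deriv_snd a b c α1 α2 α3 z1 w hw]; ring
  rw [hev.deriv_eq]
  have := (hasDerivAt_tri (α1 * z1 ^ a.1 * a.2) (α2 * z1 ^ b.1 * b.2) (α3 * z1 ^ c.1 * c.2)
    1 1 1 (a.2 - 1) (b.2 - 1) (c.2 - 1) x hx _ (fun w => rfl)).deriv
  rw [this]; push_cast; ring

lemma deriv_mixed1 (z : ℂ × ℂ) (h1 : z.1 ≠ 0) (h2 : z.2 ≠ 0) :
    deriv (fun w2 => deriv (fun w1 => trinom a b c α1 α2 α3 (w1, w2)) z.1) z.2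
      = (α1 * a.1 * z.1 ^ (a.1 - 1)) * a.2 * z.2 ^ (a.2 - 1)
        + (α2 * b.1 * z.1 ^ (b.1 - 1)) * b.2 * z.2 ^ (b.2 - 1)
        + (α3 * c.1 * z.1 ^ (c.1 - 1)) * c.2 * z.2 ^ (c.2 - 1) := by
  have hfe : (fun w2 => deriv (fun w1 => trinom a b c α1 α2 α3 (w1, w2)) z.1)
      = fun w2 => (α1 * a.1 * z.1 ^ (a.1 - 1)) * w2 ^ a.2 * 1
        + (α2 * b.1 * z.1 ^ (b.1 - 1)) * w2 ^ b.2 * 1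
        + (α3 * c.1 * z.1 ^ (c.1 - 1)) * w2 ^ c.2 * 1 := by
    funext w2
    rw [deriv_fst a b c α1 α2 α3 w2 z.1 h1]; ring
  rw [hfe]
  have := (hasDerivAt_tri (α1 * a.1 * z.1 ^ (a.1 - 1)) (α2 * b.1 * z.1 ^ (b.1 - 1))
    (α3 * c.1 * z.1 ^ (c.1 - 1)) 1 1 1 a.2 b.2 c.2 z.2 h2 _ (fun w => rfl)).deriv
  rw [this]; ring

lemma deriv_mixed2 (z : ℂ × ℂ) (h1 : z.1 ≠ 0) (h2 : z.2 ≠ 0) :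
    deriv (fun w1 => deriv (fun w2 => trinom a b c α1 α2 α3 (w1, w2)) z.2) z.1
      = (α1 * a.2 * z.2 ^ (a.2 - 1)) * a.1 * z.1 ^ (a.1 - 1)
        + (α2 * b.2 * z.2 ^ (b.2 - 1)) * b.1 * z.1 ^ (b.1 - 1)
        + (α3 * c.2 * z.2 ^ (c.2 - 1)) * c.1 * z.1 ^ (c.1 - 1) := by
  have hfe : (fun w1 => deriv (fun w2 => trinom a b c α1 α2 α3 (w1, w2)) z.2)
      = fun w1 => (α1 * a.2 * z.2 ^ (a.2 - 1)) * w1 ^ a.1 * 1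
        + (α2 * b.2 * z.2 ^ (b.2 - 1)) * w1 ^ b.1 * 1
        + (α3 * c.2 * z.2 ^ (c.2 - 1)) * w1 ^ c.1 * 1 := by
    funext w1
    rw [deriv_snd a b c α1 α2 α3 w1 z.2 h2]; ring
  rw [hfe]
  have := (hasDerivAt_tri (α1 * a.2 * z.2 ^ (a.2 - 1)) (α2 * b.2 * z.2 ^ (b.2 - 1))
    (α3 * c.2 * z.2 ^ (c.2 - 1)) 1 1 1 a.1 b.1 c.1 z.1 h1 _ (fun w => rfl)).deriv
  rw [this]; ring

end derivs

section crit
variable (a b c : ℤ × ℤ) (α1 α2 α3 : ℂ)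

lemma crit_iff (z : ℂ × ℂ) :
    IsCritPt (trinom a b c α1 α2 α3) z ↔ z.1 ≠ 0 ∧ z.2 ≠ 0 ∧
      ((a.1 : ℂ) * (α1 * z.1 ^ a.1 * z.2 ^ a.2) + (b.1 : ℂ) * (α2 * z.1 ^ b.1 * z.2 ^ b.2)
          + (c.1 : ℂ) * (α3 * z.1 ^ c.1 * z.2 ^ c.2) = 0) ∧
      ((a.2 : ℂ) * (α1 * z.1 ^ a.1 * z.2 ^ a.2) + (b.2 : ℂ) * (α2 * z.1 ^ b.1 * z.2 ^ b.2)
          + (c.2 : ℂ) * (α3 * z.1 ^ c.1 * z.2 ^ c.2) = 0) := by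
  unfold IsCritPt
  constructor
  · rintro ⟨h1, h2, hd1, hd2⟩
    refine ⟨h1, h2, ?_, ?_⟩
    · rw [deriv_fst a b c α1 α2 α3 z.2 z.1 h1] at hd1
      have := congrArg (fun t => z.1 * t) hd1
      simp only [mul_zero] at this
      rw [← this]
      simp only [zpow_sub_one₀ h1]
      field_simp
    · rw [deriv_snd a b c α1 α2 α3 z.1 z.2 h2] at hd2
      have := congrArg (fun t => z.2 * t) hd2
      simp only [mul_zero] at this
      rw [← this]
      simp only [zpow_sub_one₀ h2]
      field_simp
  · rintro ⟨h1, h2, he1, he2⟩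
    refine ⟨h1, h2, ?_, ?_⟩
    · rw [deriv_fst a b c α1 α2 α3 z.2 z.1 h1]
      have hz : z.1 * (α1 * a.1 * z.1 ^ (a.1 - 1) * z.2 ^ a.2
          + α2 * b.1 * z.1 ^ (b.1 - 1) * z.2 ^ b.2
          + α3 * c.1 * z.1 ^ (c.1 - 1) * z.2 ^ c.2)
          = (a.1 : ℂ) * (α1 * z.1 ^ a.1 * z.2 ^ a.2) + (b.1 : ℂ) * (α2 * z.1 ^ b.1 * z.2 ^ b.2)
            + (c.1 : ℂ) * (α3 * z.1 ^ c.1 * z.2 ^ c.2) := by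
        simp only [zpow_sub_one₀ h1]
        field_simp
      have := hz.trans he1
      rcases mul_eq_zero.1 this with h | h
      · exact absurd h h1
      · exact h
    · rw [deriv_snd a b c α1 α2 α3 z.1 z.2 h2]
      have hz : z.2 * ((α1 * z.1 ^ a.1) * a.2 * z.2 ^ (a.2 - 1)
          + (α2 * z.1 ^ b.1) * b.2 * z.2 ^ (b.2 - 1)
          + (α3 * z.1 ^ c.1) * c.2 * z.2 ^ (c.2 - 1))
          = (a.2 : ℂ) * (α1 * z.1 ^ a.1 * z.2 ^ a.2) + (b.2 : ℂ) * (α2 * z.1 ^ b.1 * z.2 ^ b.2)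
            + (c.2 : ℂ) * (α3 * z.1 ^ c.1 * z.2 ^ c.2) := by
        simp only [zpow_sub_one₀ h2]
        field_simp
      have := hz.trans he2
      rcases mul_eq_zero.1 this with h | h
      · exact absurd h h2
      · exact h

lemma crit_set_eq (h1 : α1 ≠ 0) (h2 : α2 ≠ 0) (h3 : α3 ≠ 0)
    (hd1 : b.1 * c.2 - b.2 * c.1 ≠ 0) (hd2 : c.1 * a.2 - c.2 * a.1 ≠ 0)
    (hd3 : a.1 * b.2 - a.2 * b.1 ≠ 0) :
    {z : ℂ × ℂ | IsCritPt (trinom a b c α1 α2 α3) z}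
      = Sol (a.1 - c.1, a.2 - c.2) (b.1 - c.1, b.2 - c.2)
          (((b.1 * c.2 - b.2 * c.1 : ℤ) : ℂ) * α3 / (((a.1 * b.2 - a.2 * b.1 : ℤ) : ℂ) * α1))
          (((c.1 * a.2 - c.2 * a.1 : ℤ) : ℂ) * α3 / (((a.1 * b.2 - a.2 * b.1 : ℤ) : ℂ) * α2)) := by
  have hd3c : ((a.1 * b.2 - a.2 * b.1 : ℤ) : ℂ) ≠ 0 := Int.cast_ne_zero.2 hd3
  ext z
  rw [Set.mem_setOf_eq, crit_iff]
  simp only [Sol, Set.mem_setOf_eq]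
  constructor
  · rintro ⟨hz1, hz2, he1, he2⟩
    have hu : ((a.1 * b.2 - a.2 * b.1 : ℤ) : ℂ) * (α1 * z.1 ^ a.1 * z.2 ^ a.2)
        = ((b.1 * c.2 - b.2 * c.1 : ℤ) : ℂ) * (α3 * z.1 ^ c.1 * z.2 ^ c.2) := by
      push_cast
      linear_combination (b.2 : ℂ) * he1 - (b.1 : ℂ) * he2
    have hv : ((a.1 * b.2 - a.2 * b.1 : ℤ) : ℂ) * (α2 * z.1 ^ b.1 * z.2 ^ b.2)
        = ((c.1 * a.2 - c.2 * a.1 : ℤ) : ℂ) * (α3 * z.1 ^ c.1 * z.2 ^ c.2) := by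
      push_cast
      linear_combination (a.1 : ℂ) * he2 - (a.2 : ℂ) * he1
    have hc1 : z.1 ^ c.1 ≠ 0 := zpow_ne_zero _ hz1
    have hc2 : z.2 ^ c.2 ≠ 0 := zpow_ne_zero _ hz2
    refine ⟨hz1, hz2, ?_, ?_⟩
    · show z.1 ^ (a.1 - c.1) * z.2 ^ (a.2 - c.2) = _
      rw [zpow_sub₀ hz1, zpow_sub₀ hz2, div_mul_div_comm,
        div_eq_div_iff (mul_ne_zero hc1 hc2) (mul_ne_zero hd3c h1)]
      linear_combination hu
    · show z.1 ^ (b.1 - c.1) * z.2 ^ (b.2 - c.2) = _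
      rw [zpow_sub₀ hz1, zpow_sub₀ hz2, div_mul_div_comm,
        div_eq_div_iff (mul_ne_zero hc1 hc2) (mul_ne_zero hd3c h2)]
      linear_combination hv
  · rintro ⟨hz1, hz2, hq1, hq2⟩
    have hc1 : z.1 ^ c.1 ≠ 0 := zpow_ne_zero _ hz1
    have hc2 : z.2 ^ c.2 ≠ 0 := zpow_ne_zero _ hz2
    rw [zpow_sub₀ hz1, zpow_sub₀ hz2] at hq1 hq2
    rw [div_mul_div_comm, div_eq_div_iff (by exact mul_ne_zero hc1 hc2)
      (mul_ne_zero hd3c h1)] at hq1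
    rw [div_mul_div_comm, div_eq_div_iff (by exact mul_ne_zero hc1 hc2)
      (mul_ne_zero hd3c h2)] at hq2
    have hu : ((a.1 * b.2 - a.2 * b.1 : ℤ) : ℂ) * (α1 * z.1 ^ a.1 * z.2 ^ a.2)
        = ((b.1 * c.2 - b.2 * c.1 : ℤ) : ℂ) * (α3 * z.1 ^ c.1 * z.2 ^ c.2) := by
      linear_combination hq1
    have hv : ((a.1 * b.2 - a.2 * b.1 : ℤ) : ℂ) * (α2 * z.1 ^ b.1 * z.2 ^ b.2)
        = ((c.1 * a.2 - c.2 * a.1 : ℤ) : ℂ) * (α3 * z.1 ^ c.1 * z.2 ^ c.2) := by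
      linear_combination hq2
    refine ⟨hz1, hz2, ?_, ?_⟩
    · have hE : ((a.1 * b.2 - a.2 * b.1 : ℤ) : ℂ)
          * ((a.1 : ℂ) * (α1 * z.1 ^ a.1 * z.2 ^ a.2) + (b.1 : ℂ) * (α2 * z.1 ^ b.1 * z.2 ^ b.2)
            + (c.1 : ℂ) * (α3 * z.1 ^ c.1 * z.2 ^ c.2)) = 0 := by
        push_cast
        push_cast at hu hv
        linear_combination (a.1 : ℂ) * hu + (b.1 : ℂ) * hv
      rcases mul_eq_zero.1 hE with h | h
      · exact absurd h hd3c
      · exact h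
    · have hE : ((a.1 * b.2 - a.2 * b.1 : ℤ) : ℂ)
          * ((a.2 : ℂ) * (α1 * z.1 ^ a.1 * z.2 ^ a.2) + (b.2 : ℂ) * (α2 * z.1 ^ b.1 * z.2 ^ b.2)
            + (c.2 : ℂ) * (α3 * z.1 ^ c.1 * z.2 ^ c.2)) = 0 := by
        push_cast
        push_cast at hu hv
        linear_combination (a.2 : ℂ) * hu + (b.2 : ℂ) * hv
      rcases mul_eq_zero.1 hE with h | h
      · exact absurd h hd3c
      · exact h

end crit

set_option maxHeartbeats 1600000 in
lemma hess_ne (a b c : ℤ × ℤ) (α1 α2 α3 : ℂ) (h1 : α1 ≠ 0) (h2 : α2 ≠ 0) (h3 : α3 ≠ 0)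
    (hdbig : (b.1 * c.2 - b.2 * c.1) * (c.1 * a.2 - c.2 * a.1) * (a.1 * b.2 - a.2 * b.1)
      * ((b.1 * c.2 - b.2 * c.1) + (c.1 * a.2 - c.2 * a.1) + (a.1 * b.2 - a.2 * b.1)) ≠ 0)
    (z : ℂ × ℂ) (hz : IsCritPt (trinom a b c α1 α2 α3) z) :
    hessDet (trinom a b c α1 α2 α3) z ≠ 0 := by
  obtain ⟨hz1, hz2, he1, he2⟩ := (crit_iff a b c α1 α2 α3 z).1 hz
  have hd3 : a.1 * b.2 - a.2 * b.1 ≠ 0 := by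
    intro h; rw [h] at hdbig; simp at hdbig
  have hd3c : ((a.1 * b.2 - a.2 * b.1 : ℤ) : ℂ) ≠ 0 := Int.cast_ne_zero.2 hd3
  have hu : ((a.1 * b.2 - a.2 * b.1 : ℤ) : ℂ) * (α1 * z.1 ^ a.1 * z.2 ^ a.2)
      = ((b.1 * c.2 - b.2 * c.1 : ℤ) : ℂ) * (α3 * z.1 ^ c.1 * z.2 ^ c.2) := by
    push_cast
    linear_combination (b.2 : ℂ) * he1 - (b.1 : ℂ) * he2
  have hv : ((a.1 * b.2 - a.2 * b.1 : ℤ) : ℂ) * (α2 * z.1 ^ b.1 * z.2 ^ b.2)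
      = ((c.1 * a.2 - c.2 * a.1 : ℤ) : ℂ) * (α3 * z.1 ^ c.1 * z.2 ^ c.2) := by
    push_cast
    linear_combination (a.1 : ℂ) * he2 - (a.2 : ℂ) * he1
  set t : ℂ := (α3 * z.1 ^ c.1 * z.2 ^ c.2) / ((a.1 * b.2 - a.2 * b.1 : ℤ) : ℂ) with htdef
  have hwne : α3 * z.1 ^ c.1 * z.2 ^ c.2 ≠ 0 :=
    mul_ne_zero (mul_ne_zero h3 (zpow_ne_zero _ hz1)) (zpow_ne_zero _ hz2)
  have ht : t ≠ 0 := div_ne_zero hwne hd3c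
  have hw' : α3 * z.1 ^ c.1 * z.2 ^ c.2 = t * ((a.1 * b.2 - a.2 * b.1 : ℤ) : ℂ) := by
    rw [htdef, div_mul_cancel₀ _ hd3c]
  have hu' : α1 * z.1 ^ a.1 * z.2 ^ a.2 = t * ((b.1 * c.2 - b.2 * c.1 : ℤ) : ℂ) := by
    rw [htdef, div_mul_eq_mul_div, eq_div_iff hd3c]
    linear_combination hu
  have hv' : α2 * z.1 ^ b.1 * z.2 ^ b.2 = t * ((c.1 * a.2 - c.2 * a.1 : ℤ) : ℂ) := by
    rw [htdef, div_mul_eq_mul_div, eq_div_iff hd3c]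
    linear_combination hv
  have key : z.1 ^ 2 * z.2 ^ 2 * hessDet (trinom a b c α1 α2 α3) z
      = ((a.1 : ℂ) * ((a.1 : ℂ) - 1) * (α1 * z.1 ^ a.1 * z.2 ^ a.2)
          + (b.1 : ℂ) * ((b.1 : ℂ) - 1) * (α2 * z.1 ^ b.1 * z.2 ^ b.2)
          + (c.1 : ℂ) * ((c.1 : ℂ) - 1) * (α3 * z.1 ^ c.1 * z.2 ^ c.2))
        * ((a.2 : ℂ) * ((a.2 : ℂ) - 1) * (α1 * z.1 ^ a.1 * z.2 ^ a.2)
          + (b.2 : ℂ) * ((b.2 : ℂ) - 1) * (α2 * z.1 ^ b.1 * z.2 ^ b.2)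
          + (c.2 : ℂ) * ((c.2 : ℂ) - 1) * (α3 * z.1 ^ c.1 * z.2 ^ c.2))
        - ((a.1 : ℂ) * (a.2 : ℂ) * (α1 * z.1 ^ a.1 * z.2 ^ a.2)
          + (b.1 : ℂ) * (b.2 : ℂ) * (α2 * z.1 ^ b.1 * z.2 ^ b.2)
          + (c.1 : ℂ) * (c.2 : ℂ) * (α3 * z.1 ^ c.1 * z.2 ^ c.2))
        * ((a.1 : ℂ) * (a.2 : ℂ) * (α1 * z.1 ^ a.1 * z.2 ^ a.2)
          + (b.1 : ℂ) * (b.2 : ℂ) * (α2 * z.1 ^ b.1 * z.2 ^ b.2)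
          + (c.1 : ℂ) * (c.2 : ℂ) * (α3 * z.1 ^ c.1 * z.2 ^ c.2)) := by
    have e11 : z.1 ^ 2 * ((α1 * a.1) * ((a.1 : ℂ) - 1) * z.1 ^ (a.1 - 1 - 1) * z.2 ^ a.2
        + (α2 * b.1) * ((b.1 : ℂ) - 1) * z.1 ^ (b.1 - 1 - 1) * z.2 ^ b.2
        + (α3 * c.1) * ((c.1 : ℂ) - 1) * z.1 ^ (c.1 - 1 - 1) * z.2 ^ c.2)
        = (a.1 : ℂ) * ((a.1 : ℂ) - 1) * (α1 * z.1 ^ a.1 * z.2 ^ a.2)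
          + (b.1 : ℂ) * ((b.1 : ℂ) - 1) * (α2 * z.1 ^ b.1 * z.2 ^ b.2)
          + (c.1 : ℂ) * ((c.1 : ℂ) - 1) * (α3 * z.1 ^ c.1 * z.2 ^ c.2) := by
      simp only [zpow_sub_one₀ hz1]
      field_simp
    have e22 : z.2 ^ 2 * ((α1 * z.1 ^ a.1) * a.2 * ((a.2 : ℂ) - 1) * z.2 ^ (a.2 - 1 - 1)
        + (α2 * z.1 ^ b.1) * b.2 * ((b.2 : ℂ) - 1) * z.2 ^ (b.2 - 1 - 1)
        + (α3 * z.1 ^ c.1) * c.2 * ((c.2 : ℂ) - 1) * z.2 ^ (c.2 - 1 - 1))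
        = (a.2 : ℂ) * ((a.2 : ℂ) - 1) * (α1 * z.1 ^ a.1 * z.2 ^ a.2)
          + (b.2 : ℂ) * ((b.2 : ℂ) - 1) * (α2 * z.1 ^ b.1 * z.2 ^ b.2)
          + (c.2 : ℂ) * ((c.2 : ℂ) - 1) * (α3 * z.1 ^ c.1 * z.2 ^ c.2) := by
      simp only [zpow_sub_one₀ hz2]
      field_simp
    have e12 : (z.1 * z.2) * ((α1 * a.1 * z.1 ^ (a.1 - 1)) * a.2 * z.2 ^ (a.2 - 1)
        + (α2 * b.1 * z.1 ^ (b.1 - 1)) * b.2 * z.2 ^ (b.2 - 1)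
        + (α3 * c.1 * z.1 ^ (c.1 - 1)) * c.2 * z.2 ^ (c.2 - 1))
        = (a.1 : ℂ) * (a.2 : ℂ) * (α1 * z.1 ^ a.1 * z.2 ^ a.2)
          + (b.1 : ℂ) * (b.2 : ℂ) * (α2 * z.1 ^ b.1 * z.2 ^ b.2)
          + (c.1 : ℂ) * (c.2 : ℂ) * (α3 * z.1 ^ c.1 * z.2 ^ c.2) := by
      simp only [zpow_sub_one₀ hz1, zpow_sub_one₀ hz2]
      field_simp
    have e21 : (z.1 * z.2) * ((α1 * a.2 * z.2 ^ (a.2 - 1)) * a.1 * z.1 ^ (a.1 - 1)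
        + (α2 * b.2 * z.2 ^ (b.2 - 1)) * b.1 * z.1 ^ (b.1 - 1)
        + (α3 * c.2 * z.2 ^ (c.2 - 1)) * c.1 * z.1 ^ (c.1 - 1))
        = (a.1 : ℂ) * (a.2 : ℂ) * (α1 * z.1 ^ a.1 * z.2 ^ a.2)
          + (b.1 : ℂ) * (b.2 : ℂ) * (α2 * z.1 ^ b.1 * z.2 ^ b.2)
          + (c.1 : ℂ) * (c.2 : ℂ) * (α3 * z.1 ^ c.1 * z.2 ^ c.2) := by
      simp only [zpow_sub_one₀ hz1, zpow_sub_one₀ hz2]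
      field_simp
    simp only [hessDet]
    rw [deriv2_fst a b c α1 α2 α3 z.2 z.1 hz1, deriv2_snd a b c α1 α2 α3 z.1 z.2 hz2,
      deriv_mixed1 a b c α1 α2 α3 z hz1 hz2, deriv_mixed2 a b c α1 α2 α3 z hz1 hz2]
    rw [← e11, ← e22, ← e12]
    ring
  rw [hu', hv', hw'] at key
  have key2 : z.1 ^ 2 * z.2 ^ 2 * hessDet (trinom a b c α1 α2 α3) z
      = t ^ 2 * (((b.1 * c.2 - b.2 * c.1) * (c.1 * a.2 - c.2 * a.1) * (a.1 * b.2 - a.2 * b.1)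
        * ((b.1 * c.2 - b.2 * c.1) + (c.1 * a.2 - c.2 * a.1) + (a.1 * b.2 - a.2 * b.1)) : ℤ) : ℂ) := by
    rw [key]
    push_cast
    ring
  intro h0
  rw [h0, mul_zero] at key2
  exact (mul_ne_zero (pow_ne_zero 2 ht) (Int.cast_ne_zero.2 hdbig)) key2.symm



lemma halfplane_interior (u : ℝ × ℝ) (hu : u ≠ 0) (S : Set (ℝ × ℝ))
    (hS : S ⊆ {x : ℝ × ℝ | 0 ≤ u.1 * x.1 + u.2 * x.2})
    (h0 : ((0:ℝ), (0:ℝ)) ∈ interior S) : False := by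
  rw [mem_interior_iff_mem_nhds, Metric.mem_nhds_iff] at h0
  obtain ⟨ε, hε, hball⟩ := h0
  have hden : (0:ℝ) < |u.1| + |u.2| + 1 := by positivity
  set δ : ℝ := ε / (2 * (|u.1| + |u.2| + 1)) with hδdef
  have hδ : 0 < δ := by positivity
  set x : ℝ × ℝ := (-δ * u.1, -δ * u.2) with hxdef
  have hx : x ∈ Metric.ball ((0:ℝ), (0:ℝ)) ε := by
    rw [Metric.mem_ball, Prod.dist_eq]
    have d1 : dist x.1 ((0:ℝ)) = δ * |u.1| := by
      rw [Real.dist_eq, sub_zero, hxdef]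
      simp [abs_mul, abs_of_pos hδ]
    have d2 : dist x.2 ((0:ℝ)) = δ * |u.2| := by
      rw [Real.dist_eq, sub_zero, hxdef]
      simp [abs_mul, abs_of_pos hδ]
    have hb : δ * (|u.1| + |u.2| + 1) = ε / 2 := by
      rw [hδdef]; field_simp
    have h1 : δ * |u.1| < ε := by nlinarith [abs_nonneg u.1, abs_nonneg u.2]
    have h2 : δ * |u.2| < ε := by nlinarith [abs_nonneg u.1, abs_nonneg u.2]
    show max (dist x.1 (0:ℝ)) (dist x.2 (0:ℝ)) < ε
    rw [d1, d2]
    exact max_lt h1 h2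
  have hmem := hS (hball hx)
  simp only [Set.mem_setOf_eq, hxdef] at hmem
  have husq : 0 < u.1 ^ 2 + u.2 ^ 2 := by
    have : u.1 ≠ 0 ∨ u.2 ≠ 0 := by
      by_contra h
      push_neg at h
      exact hu (Prod.ext h.1 h.2)
    rcases this with h | h <;> positivity
  nlinarith

lemma perp_exists (P Q : ℝ × ℝ) (h : P.1 * Q.2 - P.2 * Q.1 = 0) :
    ∃ u : ℝ × ℝ, u ≠ 0 ∧ u.1 * P.1 + u.2 * P.2 = 0 ∧ u.1 * Q.1 + u.2 * Q.2 = 0 := by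
  by_cases hP : P = 0
  · by_cases hQ : Q = 0
    · exact ⟨(1, 0), by simp, by simp [hP], by simp [hQ]⟩
    · refine ⟨(-Q.2, Q.1), ?_, by simp [hP], by simp; ring⟩
      intro h1
      rw [Prod.mk_eq_zero] at h1
      exact hQ (Prod.ext h1.2 (neg_eq_zero.1 h1.1))
  · refine ⟨(-P.2, P.1), ?_, by simp; ring, by simp; linarith [h]⟩
    intro h1
    rw [Prod.mk_eq_zero] at h1
    exact hP (Prod.ext h1.2 (neg_eq_zero.1 h1.1))

lemma hull_subset_halfplane (u : ℝ × ℝ) (A B C : ℝ × ℝ)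
    (hA : 0 ≤ u.1 * A.1 + u.2 * A.2) (hB : 0 ≤ u.1 * B.1 + u.2 * B.2)
    (hC : 0 ≤ u.1 * C.1 + u.2 * C.2) :
    convexHull ℝ {A, B, C} ⊆ {x : ℝ × ℝ | 0 ≤ u.1 * x.1 + u.2 * x.2} := by
  apply convexHull_min
  · rintro x hx
    simp only [Set.mem_insert_iff, Set.mem_singleton_iff] at hx
    rcases hx with rfl | rfl | rfl <;> assumption
  · have hlin : IsLinearMap ℝ (fun x : ℝ × ℝ => u.1 * x.1 + u.2 * x.2) := by
      constructor
      · intro x y; simp [Prod.fst_add, Prod.snd_add]; ring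
      · intro r x; simp [Prod.smul_fst, Prod.smul_snd, smul_eq_mul]; ring
    exact convex_halfSpace_ge hlin 0

/-- if `(0,0)` is interior to the hull then the first two vertices are independent -/
lemma det_ne_of_interior (A B C : ℝ × ℝ)
    (h0 : ((0:ℝ), (0:ℝ)) ∈ interior (convexHull ℝ {A, B, C})) :
    A.1 * B.2 - A.2 * B.1 ≠ 0 := by
  intro hdet
  obtain ⟨u, hu, huA, huB⟩ := perp_exists A B hdet
  rcases le_or_gt 0 (u.1 * C.1 + u.2 * C.2) with hC | hC
  · exact halfplane_interior u hu _ (hull_subset_halfplane u A B C huA.ge huB.ge hC) h0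
  · refine halfplane_interior (-u.1, -u.2) ?_ _
      (hull_subset_halfplane (-u.1, -u.2) A B C (by simp; linarith) (by simp; linarith)
        (by simp; linarith)) h0
    intro h1
    rw [Prod.mk_eq_zero] at h1
    exact hu (Prod.ext (neg_eq_zero.1 h1.1) (neg_eq_zero.1 h1.2))

lemma hull_perm1 (A B C : ℝ × ℝ) : ({A, B, C} : Set (ℝ × ℝ)) = {B, C, A} := by
  ext x; simp only [Set.mem_insert_iff, Set.mem_singleton_iff]; tauto

lemma geom_main (A B C : ℝ × ℝ)
    (h0 : ((0:ℝ), (0:ℝ)) ∈ interior (convexHull ℝ {A, B, C})) :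
    (B.1 * C.2 - B.2 * C.1) ≠ 0 ∧ (C.1 * A.2 - C.2 * A.1) ≠ 0 ∧
      (A.1 * B.2 - A.2 * B.1) ≠ 0 ∧
      (B.1 * C.2 - B.2 * C.1) + (C.1 * A.2 - C.2 * A.1) + (A.1 * B.2 - A.2 * B.1) ≠ 0 := by
  have hd3 : A.1 * B.2 - A.2 * B.1 ≠ 0 := det_ne_of_interior A B C h0
  have hd1 : B.1 * C.2 - B.2 * C.1 ≠ 0 := by
    apply det_ne_of_interior B C A
    rw [← hull_perm1]; exact h0
  have hd2 : C.1 * A.2 - C.2 * A.1 ≠ 0 := by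
    apply det_ne_of_interior C A B
    rw [← hull_perm1, ← hull_perm1]; exact h0
  refine ⟨hd1, hd2, hd3, ?_⟩
  -- barycentric coordinates
  have hAB : A ≠ B := by
    intro h; apply hd3; rw [h]; ring
  have hAC : A ≠ C := by
    intro h; apply hd2; rw [h]; ring
  have hBC : B ≠ C := by
    intro h; apply hd1; rw [h]; ring
  have hmem : ((0:ℝ), (0:ℝ)) ∈ convexHull ℝ ↑({A, B, C} : Finset (ℝ × ℝ)) := by
    have : (↑({A, B, C} : Finset (ℝ × ℝ)) : Set (ℝ × ℝ)) = {A, B, C} := by simp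
    rw [this]
    exact interior_subset h0
  rw [Finset.convexHull_eq] at hmem
  obtain ⟨w, hw0, hw1, hwc⟩ := hmem
  have hAnotin : A ∉ ({B, C} : Finset (ℝ × ℝ)) := by simp [hAB, hAC]
  have hBnotin : B ∉ ({C} : Finset (ℝ × ℝ)) := by simp [hBC]
  rw [Finset.centerMass_eq_of_sum_1 _ _ hw1] at hwc
  rw [Finset.sum_insert hAnotin, Finset.sum_insert hBnotin, Finset.sum_singleton] at hwc
  rw [Finset.sum_insert hAnotin, Finset.sum_insert hBnotin, Finset.sum_singleton] at hw1
  have hwA := hw0 A (by simp)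
  have hwB := hw0 B (by simp)
  have hwC := hw0 C (by simp)
  simp only [id] at hwc
  have hx : w A * A.1 + w B * B.1 + w C * C.1 = 0 := by
    have h := congrArg Prod.fst hwc
    simp only [Prod.fst_add, Prod.smul_fst, smul_eq_mul] at h
    linarith [h]
  have hy : w A * A.2 + w B * B.2 + w C * C.2 = 0 := by
    have h := congrArg Prod.snd hwc
    simp only [Prod.snd_add, Prod.smul_snd, smul_eq_mul] at h
    linarith [h]
  have r1 : w A * (A.1 * B.2 - A.2 * B.1) = w C * (B.1 * C.2 - B.2 * C.1) := by
    linear_combination B.2 * hx - B.1 * hy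
  have r2 : w B * (A.1 * B.2 - A.2 * B.1) = w C * (C.1 * A.2 - C.2 * A.1) := by
    linear_combination A.1 * hy - A.2 * hx
  have hwCpos : 0 < w C := by
    rcases lt_or_eq_of_le hwC with h | h
    · exact h
    · exfalso
      rw [← h] at r1 r2
      simp only [zero_mul] at r1 r2
      have h1 : w A = 0 := by
        rcases mul_eq_zero.1 r1 with h' | h'
        · exact h'
        · exact absurd h' hd3
      have h2 : w B = 0 := by
        rcases mul_eq_zero.1 r2 with h' | h'
        · exact h'
        · exact absurd h' hd3
      rw [h1, h2, ← h] at hw1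
      norm_num at hw1
  have hwApos : 0 < w A := by
    rcases lt_or_eq_of_le hwA with h | h
    · exact h
    · exfalso
      rw [← h, zero_mul] at r1
      rcases mul_eq_zero.1 r1.symm with h' | h'
      · linarith
      · exact hd1 h'
  have hwBpos : 0 < w B := by
    rcases lt_or_eq_of_le hwB with h | h
    · exact h
    · exfalso
      rw [← h, zero_mul] at r2
      rcases mul_eq_zero.1 r2.symm with h' | h'
      · linarith
      · exact hd2 h'
  -- same signs
  have hsq : 0 < (A.1 * B.2 - A.2 * B.1) ^ 2 := by positivity
  have s1 : 0 < (B.1 * C.2 - B.2 * C.1) * (A.1 * B.2 - A.2 * B.1) := by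
    have e : w C * ((B.1 * C.2 - B.2 * C.1) * (A.1 * B.2 - A.2 * B.1))
        = w A * (A.1 * B.2 - A.2 * B.1) ^ 2 := by
      linear_combination (A.1 * B.2 - A.2 * B.1) * r1.symm
    have h' : 0 < w C * ((B.1 * C.2 - B.2 * C.1) * (A.1 * B.2 - A.2 * B.1)) := by
      rw [e]; exact mul_pos hwApos hsq
    nlinarith [h', hwCpos]
  have s2 : 0 < (C.1 * A.2 - C.2 * A.1) * (A.1 * B.2 - A.2 * B.1) := by
    have e : w C * ((C.1 * A.2 - C.2 * A.1) * (A.1 * B.2 - A.2 * B.1))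
        = w B * (A.1 * B.2 - A.2 * B.1) ^ 2 := by
      linear_combination (A.1 * B.2 - A.2 * B.1) * r2.symm
    have h' : 0 < w C * ((C.1 * A.2 - C.2 * A.1) * (A.1 * B.2 - A.2 * B.1)) := by
      rw [e]; exact mul_pos hwBpos hsq
    nlinarith [h', hwCpos]
  intro hD
  have e2 : (B.1 * C.2 - B.2 * C.1) * (A.1 * B.2 - A.2 * B.1)
      + (C.1 * A.2 - C.2 * A.1) * (A.1 * B.2 - A.2 * B.1)
      + (A.1 * B.2 - A.2 * B.1) ^ 2 = 0 := by
    linear_combination (A.1 * B.2 - A.2 * B.1) * hD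
  linarith [s1, s2, hsq]


theorem trinomial_critical_points
    (a b c : ℤ × ℤ) (α1 α2 α3 : ℂ) (h1 : α1 ≠ 0) (h2 : α2 ≠ 0) (h3 : α3 ≠ 0)
    (horigin : ((0 : ℝ), (0 : ℝ)) ∈ interior (convexHull ℝ {toR2 a, toR2 b, toR2 c})) :
    {z : ℂ × ℂ | IsCritPt (trinom a b c α1 α2 α3) z}.Finite ∧
    {z : ℂ × ℂ | IsCritPt (trinom a b c α1 α2 α3) z}.ncard =
      (Matrix.det !![b.1 - a.1, c.1 - a.1; b.2 - a.2, c.2 - a.2]).natAbs ∧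
    ∀ z : ℂ × ℂ, IsCritPt (trinom a b c α1 α2 α3) z →
      hessDet (trinom a b c α1 α2 α3) z ≠ 0 := by
  obtain ⟨hd1R, hd2R, hd3R, hDR⟩ := geom_main (toR2 a) (toR2 b) (toR2 c) horigin
  have hd1 : b.1 * c.2 - b.2 * c.1 ≠ 0 := by
    intro h
    apply hd1R
    simp only [toR2]
    exact_mod_cast congrArg (fun n : ℤ => (n : ℝ)) h
  have hd2 : c.1 * a.2 - c.2 * a.1 ≠ 0 := by
    intro h
    apply hd2R
    simp only [toR2]
    exact_mod_cast congrArg (fun n : ℤ => (n : ℝ)) h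
  have hd3 : a.1 * b.2 - a.2 * b.1 ≠ 0 := by
    intro h
    apply hd3R
    simp only [toR2]
    exact_mod_cast congrArg (fun n : ℤ => (n : ℝ)) h
  have hD : (b.1 * c.2 - b.2 * c.1) + (c.1 * a.2 - c.2 * a.1) + (a.1 * b.2 - a.2 * b.1) ≠ 0 := by
    intro h
    apply hDR
    simp only [toR2]
    exact_mod_cast congrArg (fun n : ℤ => (n : ℝ)) h
  have hd1c : ((b.1 * c.2 - b.2 * c.1 : ℤ) : ℂ) ≠ 0 := Int.cast_ne_zero.2 hd1
  have hd2c : ((c.1 * a.2 - c.2 * a.1 : ℤ) : ℂ) ≠ 0 := Int.cast_ne_zero.2 hd2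
  have hd3c : ((a.1 * b.2 - a.2 * b.1 : ℤ) : ℂ) ≠ 0 := Int.cast_ne_zero.2 hd3
  have hset := crit_set_eq a b c α1 α2 α3 h1 h2 h3 hd1 hd2 hd3
  have hdet0 : (a.1 - c.1, a.2 - c.2).1 * (b.1 - c.1, b.2 - c.2).2
      - (a.1 - c.1, a.2 - c.2).2 * (b.1 - c.1, b.2 - c.2).1 ≠ 0 := by
    show (a.1 - c.1) * (b.2 - c.2) - (a.2 - c.2) * (b.1 - c.1) ≠ 0
    intro h
    apply hD
    linear_combination h
  obtain ⟨hfin, hcard⟩ := sol_count (a.1 - c.1, a.2 - c.2) (b.1 - c.1, b.2 - c.2)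
    (((b.1 * c.2 - b.2 * c.1 : ℤ) : ℂ) * α3 / (((a.1 * b.2 - a.2 * b.1 : ℤ) : ℂ) * α1))
    (((c.1 * a.2 - c.2 * a.1 : ℤ) : ℂ) * α3 / (((a.1 * b.2 - a.2 * b.1 : ℤ) : ℂ) * α2))
    (div_ne_zero (mul_ne_zero hd1c h3) (mul_ne_zero hd3c h1))
    (div_ne_zero (mul_ne_zero hd2c h3) (mul_ne_zero hd3c h2))
    hdet0
  refine ⟨by rw [hset]; exact hfin, ?_, ?_⟩
  · rw [hset, hcard]
    apply congrArg Int.natAbs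
    rw [Matrix.det_fin_two_of]
    ring
  · intro z hz
    exact hess_ne a b c α1 α2 α3 h1 h2 h3
      (mul_ne_zero (mul_ne_zero (mul_ne_zero hd1 hd2) hd3) hD) z hz

end
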